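/- arXiv:2605.04078 — 2 statements merged into one kernel-verified Lean document; each statement's English description precedes it below -/
import Mathlib

section
/- Let V be a finite set, π a strictly positive probability distribution on V, and r : V → ℝ nonconstant on the support. Then the function η ↦ KL(π_η ‖ π) is monotonically nondecreasing on [0, ∞), where π_η is the exponential tilt of π by η·r. -/
noncomputable def Ztilt {V : Type*} [Fintype V] (p r : V → ℝ) (η : ℝ) : ℝ :=
  ∑ a, p a * Real.exp (η * r a)

noncomputable def tilt {V : Type*} [Fintype V] (p r : V → ℝ) (η : ℝ) (a : V) : ℝ :=
  p a * Real.exp (η * r a) / Ztilt p r η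

noncomputable def KLdiv {V : Type*} [Fintype V] (p q : V → ℝ) : ℝ :=
  ∑ a, p a * Real.log (p a / q a)

noncomputable def S1' {V : Type*} [Fintype V] (p r : V → ℝ) (η : ℝ) : ℝ :=
  ∑ a, p a * r a * Real.exp (η * r a)

noncomputable def S2' {V : Type*} [Fintype V] (p r : V → ℝ) (η : ℝ) : ℝ :=
  ∑ a, p a * r a ^ 2 * Real.exp (η * r a)

section aux
set_option linter.unusedSectionVars false
variable {V : Type*} [Fintype V] [Nonempty V]

lemma Z_pos (π : V → ℝ) (hpos : ∀ a, 0 < π a) (r : V → ℝ) (η : ℝ) :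
    0 < Ztilt π r η :=
  Finset.sum_pos (fun a _ => mul_pos (hpos a) (Real.exp_pos _)) Finset.univ_nonempty

lemma hZ_deriv (π r : V → ℝ) (η : ℝ) : HasDerivAt (Ztilt π r) (S1' π r η) η := by
  unfold Ztilt S1'
  refine HasDerivAt.fun_sum (fun a _ => ?_)
  have h1 : HasDerivAt (fun x : ℝ => x * r a) (r a) η := by
    simpa using (hasDerivAt_id η).mul_const (r a)
  have := (h1.exp).const_mul (π a)
  refine this.congr_deriv ?_; ring

lemma hS1_deriv (π r : V → ℝ) (η : ℝ) : HasDerivAt (S1' π r) (S2' π r η) η := by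
  unfold S1' S2'
  refine HasDerivAt.fun_sum (fun a _ => ?_)
  have h1 : HasDerivAt (fun x : ℝ => x * r a) (r a) η := by
    simpa using (hasDerivAt_id η).mul_const (r a)
  have := (h1.exp).const_mul (π a * r a)
  refine this.congr_deriv ?_; ring

lemma KL_eq (π : V → ℝ) (hpos : ∀ a, 0 < π a) (r : V → ℝ) (η : ℝ) :
    KLdiv (tilt π r η) π = η * S1' π r η / Ztilt π r η - Real.log (Ztilt π r η) := by
  have hZ := Z_pos π hpos r η
  have hZne := ne_of_gt hZ
  unfold KLdiv tilt
  have key : ∀ a : V,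
      (π a * Real.exp (η * r a) / Ztilt π r η) *
        Real.log ((π a * Real.exp (η * r a) / Ztilt π r η) / π a)
      = π a * Real.exp (η * r a) / Ztilt π r η * (η * r a)
        - π a * Real.exp (η * r a) / Ztilt π r η * Real.log (Ztilt π r η) := by
    intro a
    have hπ := (hpos a).ne'
    have : (π a * Real.exp (η * r a) / Ztilt π r η) / π a
        = Real.exp (η * r a) / Ztilt π r η := by field_simp
    rw [this, Real.log_div (Real.exp_ne_zero _) hZne, Real.log_exp]
    ring
  rw [Finset.sum_congr rfl (fun a _ => key a), Finset.sum_sub_distrib]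
  have h1 : ∑ a : V, π a * Real.exp (η * r a) / Ztilt π r η * (η * r a)
      = η * S1' π r η / Ztilt π r η := by
    unfold S1'
    rw [Finset.mul_sum, Finset.sum_div]
    refine Finset.sum_congr rfl (fun a _ => ?_)
    field_simp
  have h2 : ∑ a : V, π a * Real.exp (η * r a) / Ztilt π r η * Real.log (Ztilt π r η)
      = Real.log (Ztilt π r η) := by
    rw [← Finset.sum_mul, ← Finset.sum_div]
    rw [show (∑ a : V, π a * Real.exp (η * r a)) = Ztilt π r η from rfl]
    rw [div_self hZne, one_mul]
  rw [h1, h2]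

lemma var_nonneg (π : V → ℝ) (hpos : ∀ a, 0 < π a) (r : V → ℝ) (η : ℝ) :
    (S1' π r η) ^ 2 ≤ S2' π r η * Ztilt π r η := by
  have cs := Finset.sum_mul_sq_le_sq_mul_sq Finset.univ
    (fun a => r a * Real.sqrt (π a * Real.exp (η * r a)))
    (fun a => Real.sqrt (π a * Real.exp (η * r a)))
  have hnn : ∀ a : V, (0:ℝ) ≤ π a * Real.exp (η * r a) :=
    fun a => le_of_lt (mul_pos (hpos a) (Real.exp_pos _))
  have e1 : ∀ a : V, r a * Real.sqrt (π a * Real.exp (η * r a)) * Real.sqrt (π a * Real.exp (η * r a))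
      = π a * r a * Real.exp (η * r a) := by
    intro a
    rw [mul_assoc, Real.mul_self_sqrt (hnn a)]; ring
  have e2 : ∀ a : V, (r a * Real.sqrt (π a * Real.exp (η * r a))) ^ 2
      = π a * r a ^ 2 * Real.exp (η * r a) := by
    intro a
    rw [mul_pow, Real.sq_sqrt (hnn a)]; ring
  have e3 : ∀ a : V, (Real.sqrt (π a * Real.exp (η * r a))) ^ 2
      = π a * Real.exp (η * r a) := fun a => Real.sq_sqrt (hnn a)
  simp only [e1, e2, e3] at cs
  exact cs

lemma hg_deriv (π : V → ℝ) (hpos : ∀ a, 0 < π a) (r : V → ℝ) (η : ℝ) :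
    HasDerivAt (fun x => x * S1' π r x / Ztilt π r x - Real.log (Ztilt π r x))
      (η * ((S2' π r η * Ztilt π r η - (S1' π r η) ^ 2) / (Ztilt π r η) ^ 2)) η := by
  have hZpos := Z_pos π hpos r η
  have hZne := ne_of_gt hZpos
  have hZ := hZ_deriv π r η
  have hS1 := hS1_deriv π r η
  have h1 : HasDerivAt (fun x => x * S1' π r x) (S1' π r η + η * S2' π r η) η := by
    have := (hasDerivAt_id η).mul hS1
    refine this.congr_deriv ?_; simp
  have h2 := h1.div hZ hZne
  have h3 := (Real.hasDerivAt_log hZne).comp η hZ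
  have := h2.sub h3
  refine this.congr_deriv ?_
  field_simp
  ring

end aux

theorem stmt_15 {V : Type*} [Fintype V] [Nonempty V]
    (π : V → ℝ) (hpos : ∀ a, 0 < π a) (hsum : ∑ a, π a = 1)
    (r : V → ℝ) (hr : ∃ a b, r a ≠ r b) :
    ∀ η₁ η₂ : ℝ, 0 ≤ η₁ → η₁ ≤ η₂ →
      KLdiv (tilt π r η₁) π ≤ KLdiv (tilt π r η₂) π := by
  intro η₁ η₂ h1 h2
  have heq : (fun η => KLdiv (tilt π r η) π)
      = fun x => x * S1' π r x / Ztilt π r x - Real.log (Ztilt π r x) :=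
    funext (fun η => KL_eq π hpos r η)
  have mono : MonotoneOn (fun η => KLdiv (tilt π r η) π) (Set.Ici (0:ℝ)) := by
    rw [heq]
    apply monotoneOn_of_deriv_nonneg (convex_Ici 0)
    · exact fun x _ => ((hg_deriv π hpos r x).differentiableAt.continuousAt).continuousWithinAt
    · intro x _
      exact ((hg_deriv π hpos r x).differentiableAt).differentiableWithinAt
    · intro x hx
      rw [interior_Ici] at hx
      rw [(hg_deriv π hpos r x).deriv]
      have hZpos := Z_pos π hpos r x
      have hnum : 0 ≤ S2' π r x * Ztilt π r x - (S1' π r x) ^ 2 :=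
        sub_nonneg.mpr (var_nonneg π hpos r x)
      exact mul_nonneg (le_of_lt hx) (div_nonneg hnum (sq_nonneg _))
  exact mono (Set.mem_Ici.mpr h1) (Set.mem_Ici.mpr (le_trans h1 h2)) h2
end

section
/- Let V be a finite set, π a strictly positive probability distribution on V, r : V → ℝ, and η ≥ 0. The expected reward gap satisfies E_{π_η}[r] − E_π[r] ≥ 0, and if additionally r is not π-almost-surely constant and η > 0, the inequality is strict: E_{π_η}[r] > E_π[r]. -/
theorem stmt_17 {V : Type*} [Fintype V] [Nonempty V]
    (π : V → ℝ) (hpos : ∀ a, 0 < π a) (hsum : ∑ a, π a = 1)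
    (r : V → ℝ) (η : ℝ) (hη : 0 ≤ η) :
    ∑ a, π a * r a ≤ ∑ a, tilt π r η a * r a ∧
    ((∃ a b, r a ≠ r b) → 0 < η → ∑ a, π a * r a < ∑ a, tilt π r η a * r a) := by
  set E : V → ℝ := fun a => Real.exp (η * r a) with hE
  have hZ : 0 < Ztilt π r η := by
    apply Finset.sum_pos
    · intro a _; exact mul_pos (hpos a) (Real.exp_pos _)
    · exact Finset.univ_nonempty
  have htilt : ∑ a, tilt π r η a * r a = (∑ a, π a * E a * r a) / Ztilt π r η := by
    simp_rw [tilt, div_mul_eq_mul_div, ← Finset.sum_div]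
    rfl
  have key : ∑ a, ∑ b, π a * π b * ((r a - r b) * (E a - E b)) =
      2 * ((∑ a, π a * E a * r a) - Ztilt π r η * (∑ a, π a * r a)) := by
    have h1 : ∀ a b : V, π a * π b * ((r a - r b) * (E a - E b)) =
        (π a * E a * r a) * π b - (π a * r a) * (π b * E b)
        - (π a * E a) * (π b * r b) + π a * (π b * E b * r b) := by
      intro a b; ring
    simp_rw [h1, Finset.sum_add_distrib, Finset.sum_sub_distrib, ← Finset.mul_sum,
      ← Finset.sum_mul, hsum]
    have : Ztilt π r η = ∑ a, π a * E a := rfl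
    rw [this]; ring
  have hterm : ∀ a b : V, 0 ≤ π a * π b * ((r a - r b) * (E a - E b)) := by
    intro a b
    apply mul_nonneg (mul_nonneg (hpos a).le (hpos b).le)
    rcases le_total (r a) (r b) with h | h
    · have : E a ≤ E b := Real.exp_le_exp.mpr (mul_le_mul_of_nonneg_left h hη)
      nlinarith
    · have : E b ≤ E a := Real.exp_le_exp.mpr (mul_le_mul_of_nonneg_left h hη)
      nlinarith
  have hnn : 0 ≤ (∑ a, π a * E a * r a) - Ztilt π r η * (∑ a, π a * r a) := by
    nlinarith [Finset.sum_nonneg (fun a (_ : a ∈ Finset.univ) =>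
      Finset.sum_nonneg (fun b (_ : b ∈ Finset.univ) => hterm a b)), key]
  constructor
  · rw [htilt, le_div_iff₀ hZ, mul_comm]
    linarith
  · rintro ⟨a, b, hab⟩ hηpos
    have hstrict : 0 < (∑ a, π a * E a * r a) - Ztilt π r η * (∑ a, π a * r a) := by
      have hpos2 : 0 < ∑ a, ∑ b, π a * π b * ((r a - r b) * (E a - E b)) := by
        apply Finset.sum_pos' (fun x _ => Finset.sum_nonneg (fun y _ => hterm x y))
        refine ⟨a, Finset.mem_univ a, ?_⟩
        apply Finset.sum_pos' (fun y _ => hterm a y)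
        refine ⟨b, Finset.mem_univ b, ?_⟩
        apply mul_pos (mul_pos (hpos a) (hpos b))
        rcases lt_or_gt_of_ne hab with h | h
        · have : E a < E b := Real.exp_lt_exp.mpr ((mul_lt_mul_iff_right₀ hηpos).mpr h)
          nlinarith
        · have : E b < E a := Real.exp_lt_exp.mpr ((mul_lt_mul_iff_right₀ hηpos).mpr h)
          nlinarith
      linarith [key]
    rw [htilt, lt_div_iff₀ hZ, mul_comm]
    linarith
end
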